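/- The Whitney sphere immersion F(x) = (1/(1+x_{n+1}²))·(x₁, x₁x_{n+1}, …, xₙ, xₙx_{n+1}) on 𝕊ⁿ fails to be injective only at the north and south poles: F(p) = F(q) with p ≠ q implies {p,q} = {(0,…,0,1), (0,…,0,-1)}, and both poles are mapped to the origin. -/

import Mathlib

open Set

noncomputable def whitneyMap (n : ℕ) (x : Fin (n + 1) → ℝ) : Fin n → ℂ := fun i =>
  (((1 + (x (Fin.last n)) ^ 2)⁻¹ * x i.castSucc : ℝ) : ℂ) *
    (1 + (x (Fin.last n) : ℂ) * Complex.I)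

/-- The north pole `(0,…,0,1)` of `𝕊ⁿ`. -/
def northPole (n : ℕ) : Fin (n + 1) → ℝ := fun i => if i = Fin.last n then 1 else 0

theorem whitney_double_point (n : ℕ) (p q : Fin (n + 1) → ℝ)
    (hp : ∑ i, (p i) ^ 2 = 1) (hq : ∑ i, (q i) ^ 2 = 1) :
    (p ≠ q → whitneyMap n p = whitneyMap n q →
      ({p, q} : Set (Fin (n + 1) → ℝ)) = {northPole n, -northPole n}) ∧
    whitneyMap n (northPole n) = 0 ∧ whitneyMap n (-northPole n) = 0 := by
  have hNP : ∀ i : Fin n, northPole n i.castSucc = 0 := fun i => by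
    simp [northPole, (Fin.castSucc_lt_last i).ne]
  refine ⟨?_, ?_, ?_⟩
  · intro hpq h
    have h1t : (1 : ℝ) + p (Fin.last n) ^ 2 ≠ 0 := by positivity
    have h1s : (1 : ℝ) + q (Fin.last n) ^ 2 ≠ 0 := by positivity
    have key : ∀ i : Fin n,
        (1 + p (Fin.last n) ^ 2)⁻¹ * p i.castSucc
          = (1 + q (Fin.last n) ^ 2)⁻¹ * q i.castSucc ∧
        p (Fin.last n) * ((1 + p (Fin.last n) ^ 2)⁻¹ * p i.castSucc) =
          q (Fin.last n) * ((1 + q (Fin.last n) ^ 2)⁻¹ * q i.castSucc) := by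
      intro i
      have h2 := congrFun h i
      simp only [whitneyMap, Complex.ext_iff, Complex.add_re, Complex.mul_re, Complex.ofReal_re,
        Complex.ofReal_im, Complex.one_re, Complex.one_im, Complex.mul_im, Complex.I_re,
        Complex.I_im, Complex.add_im] at h2
      constructor
      · linarith [h2.1]
      · nlinarith [h2.1, h2.2]
    by_cases hz : ∀ i : Fin n, p i.castSucc = 0
    · -- all non-last coordinates of p vanish, so both are poles
      have hqz : ∀ i : Fin n, q i.castSucc = 0 := by
        intro i
        have := (key i).1
        rw [hz i, mul_zero] at this
        field_simp at this
        simpa using this.symm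
      have hpl : p (Fin.last n) ^ 2 = 1 := by
        rw [Fin.sum_univ_castSucc] at hp
        have : ∑ i : Fin n, p i.castSucc ^ 2 = 0 := by
          apply Finset.sum_eq_zero; intro i _; rw [hz i]; ring
        linarith
      have hql : q (Fin.last n) ^ 2 = 1 := by
        rw [Fin.sum_univ_castSucc] at hq
        have : ∑ i : Fin n, q i.castSucc ^ 2 = 0 := by
          apply Finset.sum_eq_zero; intro i _; rw [hqz i]; ring
        linarith
      have hpl' : p (Fin.last n) = 1 ∨ p (Fin.last n) = -1 := sq_eq_one_iff.mp hpl
      have hql' : q (Fin.last n) = 1 ∨ q (Fin.last n) = -1 := sq_eq_one_iff.mp hql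
      have hpN : ∀ c : Fin (n+1) → ℝ, (∀ i : Fin n, c i.castSucc = 0) →
          c (Fin.last n) = 1 → c = northPole n := by
        intro c hc hl
        funext j
        induction j using Fin.lastCases with
        | last => simpa [northPole] using hl
        | cast i => rw [hc i, hNP i]
      have hpS : ∀ c : Fin (n+1) → ℝ, (∀ i : Fin n, c i.castSucc = 0) →
          c (Fin.last n) = -1 → c = -northPole n := by
        intro c hc hl
        funext j
        induction j using Fin.lastCases with
        | last => simp [northPole, hl]
        | cast i => simp [hc i, hNP i]
      rcases hpl' with h1 | h1 <;> rcases hql' with h2 | h2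
      · exact absurd (funext fun j => by
          induction j using Fin.lastCases with
          | last => rw [h1, h2]
          | cast i => rw [hz i, hqz i]) hpq
      · rw [hpN p hz h1, hpS q hqz h2]
      · rw [hpS p hz h1, hpN q hqz h2, Set.pair_comm]
      · exact absurd (funext fun j => by
          induction j using Fin.lastCases with
          | last => rw [h1, h2]
          | cast i => rw [hz i, hqz i]) hpq
    · -- some coordinate is nonzero, derive p = q, contradiction
      push_neg at hz
      obtain ⟨i, hi⟩ := hz
      have ha : (1 + p (Fin.last n) ^ 2)⁻¹ * p i.castSucc ≠ 0 :=
        mul_ne_zero (inv_ne_zero h1t) hi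
      have hts : p (Fin.last n) = q (Fin.last n) := by
        have h1 := (key i).1
        have h2 := (key i).2
        rw [← h1] at h2
        exact mul_right_cancel₀ ha h2
      have : p = q := by
        funext j
        induction j using Fin.lastCases with
        | last => exact hts
        | cast i =>
          have h1 := (key i).1
          rw [← hts] at h1
          exact mul_left_cancel₀ (inv_ne_zero h1t) h1
      exact absurd this hpq
  · funext i; simp [whitneyMap, hNP i]
  · funext i; simp [whitneyMap, hNP i]
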